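/- For every exponent q with 1 < q ≤ 2, there exists a constant C > 0 such that for all a ∈ [-1,1] and all b₁, b₂ ∈ ℝ, |(a+b₁)*|a+b₁|^(q-1) - (a+b₂)*|a+b₂|^(q-1) - q*|a|^(q-1)*(b₁ - b₂)| ≤ C*|b₁ - b₂|*(|b₁|^(q-1) + |b₂|^(q-1)). -/

import Mathlib

open Real Set NNReal

lemma aux_rpow_subadd {x y p : ℝ} (hx : 0 ≤ x) (hy : 0 ≤ y) (hp : 0 ≤ p) (hp1 : p ≤ 1) :
    (x + y) ^ p ≤ x ^ p + y ^ p := by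
  have h := NNReal.rpow_add_le_add_rpow (⟨x, hx⟩ : ℝ≥0) (⟨y, hy⟩ : ℝ≥0) hp hp1
  have h2 := (NNReal.coe_le_coe).2 h
  exact_mod_cast h2

lemma aux_holder {p : ℝ} (hp : 0 ≤ p) (hp1 : p ≤ 1) (x y : ℝ) :
    |x| ^ p - |y| ^ p ≤ |x - y| ^ p := by
  have h1 : |x| ≤ |y| + |x - y| := by
    have := abs_sub_abs_le_abs_sub x y
    linarith
  have h2 : |x| ^ p ≤ (|y| + |x - y|) ^ p :=
    Real.rpow_le_rpow (abs_nonneg _) h1 hp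
  have h3 := aux_rpow_subadd (abs_nonneg y) (abs_nonneg (x - y)) hp hp1
  linarith

lemma aux_hasDerivAt {q : ℝ} (hq1 : 1 < q) (x : ℝ) :
    HasDerivAt (fun x : ℝ => x * |x| ^ (q - 1)) (q * |x| ^ (q - 1)) x := by
  rcases lt_trichotomy x 0 with hx | hx | hx
  · have hd : HasDerivAt (fun y : ℝ => -((-y) ^ q)) (q * (-x) ^ (q - 1)) x := by
      have h1 : HasDerivAt (fun y : ℝ => -y) (-1) x := (hasDerivAt_id x).neg
      have h2 : HasDerivAt (fun z : ℝ => z ^ q) (q * (-x) ^ (q - 1)) (-x) :=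
        Real.hasDerivAt_rpow_const (Or.inl (by linarith))
      have h3 := (h2.comp x h1).neg
      exact h3.congr_deriv (by ring)
    rw [abs_of_neg hx]
    refine HasDerivAt.congr_of_eventuallyEq hd ?_
    filter_upwards [eventually_lt_nhds hx] with y hy
    rw [abs_of_neg hy]
    have hny : (0:ℝ) < -y := by linarith
    rw [show q = 1 + (q - 1) by ring, Real.rpow_add hny, Real.rpow_one]
    ring_nf
  · subst hx
    rw [abs_zero, Real.zero_rpow (by linarith), mul_zero]
    rw [hasDerivAt_iff_tendsto_slope]
    have hcont : Filter.Tendsto (fun y : ℝ => |y| ^ (q - 1)) (nhds 0) (nhds 0) := by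
      have : ContinuousAt (fun y : ℝ => |y| ^ (q - 1)) 0 :=
        (Real.continuousAt_rpow_const |(0:ℝ)| (q-1) (Or.inr (by linarith))).comp
          continuous_abs.continuousAt
      simpa [Real.zero_rpow (show q - 1 ≠ 0 by linarith)] using this.tendsto
    refine ((hcont.mono_left nhdsWithin_le_nhds).congr' ?_)
    filter_upwards [self_mem_nhdsWithin] with y (hy : y ≠ 0)
    simp [slope, hy, mul_comm, mul_div_assoc, div_self hy]
  · have hd : HasDerivAt (fun y : ℝ => y ^ q) (q * x ^ (q - 1)) x :=
      Real.hasDerivAt_rpow_const (Or.inl (ne_of_gt hx))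
    rw [abs_of_pos hx]
    refine HasDerivAt.congr_of_eventuallyEq hd ?_
    filter_upwards [eventually_gt_nhds hx] with y hy
    rw [abs_of_pos hy, show q = 1 + (q - 1) by ring, Real.rpow_add hy, Real.rpow_one]
    ring_nf

theorem stmt_2 (q : ℝ) (hq1 : 1 < q) (hq2 : q ≤ 2) :
    ∃ C : ℝ, 0 < C ∧ ∀ a ∈ Set.Icc (-1 : ℝ) 1, ∀ b₁ b₂ : ℝ,
      |(a + b₁) * |a + b₁| ^ (q - 1) - (a + b₂) * |a + b₂| ^ (q - 1)
          - q * |a| ^ (q - 1) * (b₁ - b₂)|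
        ≤ C * |b₁ - b₂| * (|b₁| ^ (q - 1) + |b₂| ^ (q - 1)) := by
  refine ⟨q, by linarith, fun a _ b₁ b₂ => ?_⟩
  have hp0 : (0:ℝ) ≤ q - 1 := by linarith
  have hp1 : q - 1 ≤ 1 := by linarith
  set K : ℝ := q * (|b₁| ^ (q - 1) + |b₂| ^ (q - 1)) with hK
  set f : ℝ → ℝ := fun x => x * |x| ^ (q - 1) - q * |a| ^ (q - 1) * x with hf
  set s : Set ℝ := segment ℝ (a + b₂) (a + b₁) with hs
  have hderiv : ∀ x ∈ s, HasDerivWithinAt f (q * |x| ^ (q - 1) - q * |a| ^ (q - 1)) s x := by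
    intro x _
    have h1 := (aux_hasDerivAt hq1 x).sub ((hasDerivAt_id x).const_mul (q * |a| ^ (q - 1)))
    have h2 := h1.hasDerivWithinAt (s := s)
    simp only [mul_one] at h2
    exact h2
  have hbound : ∀ x ∈ s, ‖q * |x| ^ (q - 1) - q * |a| ^ (q - 1)‖ ≤ K := by
    intro x hx
    obtain ⟨t₁, t₂, ht₁, ht₂, hsum, hxe⟩ := hx
    have hxa : |x - a| ≤ |b₁| + |b₂| := by
      simp only [smul_eq_mul] at hxe
      have hxa' : x - a = t₁ * b₂ + t₂ * b₁ := by
        linear_combination -hxe + a * hsum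
      rw [hxa']
      have h1 := abs_add_le (t₁ * b₂) (t₂ * b₁)
      rw [abs_mul, abs_mul, abs_of_nonneg ht₁, abs_of_nonneg ht₂] at h1
      nlinarith [abs_nonneg b₁, abs_nonneg b₂]
    have hstep : |x - a| ^ (q - 1) ≤ |b₁| ^ (q - 1) + |b₂| ^ (q - 1) := by
      calc |x - a| ^ (q - 1) ≤ (|b₁| + |b₂|) ^ (q - 1) :=
            Real.rpow_le_rpow (abs_nonneg _) hxa hp0
        _ ≤ _ := aux_rpow_subadd (abs_nonneg _) (abs_nonneg _) hp0 hp1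
    have habs : abs (|x| ^ (q - 1) - |a| ^ (q - 1)) ≤ |x - a| ^ (q - 1) := by
      rw [abs_sub_le_iff]
      constructor
      · exact aux_holder hp0 hp1 x a
      · have h := aux_holder hp0 hp1 a x
        rw [abs_sub_comm a x] at h
        exact h
    have : ‖q * |x| ^ (q - 1) - q * |a| ^ (q - 1)‖ = q * abs (|x| ^ (q - 1) - |a| ^ (q - 1)) := by
      rw [Real.norm_eq_abs, ← mul_sub, abs_mul, abs_of_pos (by linarith : (0:ℝ) < q)]
    rw [this, hK]
    have h2 : abs (|x| ^ (q - 1) - |a| ^ (q - 1)) ≤ |b₁| ^ (q - 1) + |b₂| ^ (q - 1) :=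
      habs.trans hstep
    nlinarith
  have hmvt := (convex_segment (a + b₂) (a + b₁)).norm_image_sub_le_of_norm_hasDerivWithin_le
    hderiv hbound (left_mem_segment ℝ _ _) (right_mem_segment ℝ _ _)
  rw [Real.norm_eq_abs, Real.norm_eq_abs] at hmvt
  have he1 : f (a + b₁) - f (a + b₂)
      = (a + b₁) * |a + b₁| ^ (q - 1) - (a + b₂) * |a + b₂| ^ (q - 1)
          - q * |a| ^ (q - 1) * (b₁ - b₂) := by
    simp only [hf]; ring
  have he2 : (a + b₁) - (a + b₂) = b₁ - b₂ := by ring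
  rw [he1, he2] at hmvt
  calc _ ≤ K * |b₁ - b₂| := hmvt
    _ = q * |b₁ - b₂| * (|b₁| ^ (q - 1) + |b₂| ^ (q - 1)) := by rw [hK]; ring
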